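/- The shuffle relation for multiple polylogarithms: for any two words w₁, w₂ over the alphabet {x_c : c ∈ Σ} that do not end in x_b, Li_b(w₁; z) · Li_b(w₂; z) = Li_b(w₁ ⧢ w₂; z) for z in the disc |z−b| < min_{c≠b}|c−b| (Li extended linearly to linear combinations of words). -/

import Mathlib

open scoped Classical

/-- The shuffle product of two words, as a multiset of words. -/
def sh {α : Type*} : List α → List α → Multiset (List α)
  | [], w => {w}
  | u, [] => {u}
  | a :: u, b :: v => (sh u (b :: v)).map (a :: ·) + (sh (a :: u) v).map (b :: ·)
termination_by u v => u.length + v.length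

/-- Parse a word `x_b^{k₁−1} x_{c₁} ⋯ x_b^{k_r−1} x_{c_r}` (not ending in `x_b`)
into its list of data `[(k₁, c₁), …, (k_r, c_r)]`. -/
noncomputable def parseWord (b : ℂ) : List ℂ → List (ℕ × ℂ)
  | [] => []
  | a :: t =>
    if a = b then
      match parseWord b t with
      | (k, c) :: rest => (k + 1, c) :: rest
      | [] => []
    else (1, a) :: parseWord b t

/-- The multiple polylogarithm attached to a word `w` (not ending in `x_b`):
for `w = x_b^{k₁−1}x_{c₁}⋯x_b^{k_r−1}x_{c_r}`,
`Li_b(w; z) = (−1)^r Σ_{m₁>⋯>m_r>0} ∏_i ((z−b)/(c_i−b))^{m_i−m_{i+1}}/m_i^{k_i}`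
(with `m_{r+1} = 0`), and `Li_b(1; z) = 1`. -/
noncomputable def listLi (b : ℂ) (w : List ℂ) (z : ℂ) : ℂ :=
  let L := parseWord b w
  (-1 : ℂ) ^ L.length *
    ∑' m : {f : Fin L.length → ℕ // StrictAnti f ∧ ∀ i, 0 < f i},
      ∏ i : Fin L.length,
        ((z - b) / ((L.get i).2 - b)) ^
            (m.1 i - (if h : (i : ℕ) + 1 < L.length then m.1 ⟨(i : ℕ) + 1, h⟩ else 0)) /
          ((m.1 i : ℂ)) ^ ((L.get i).1)

open PowerSeries

namespace MPLAux

noncomputable def intg (F : PowerSeries ℂ) : PowerSeries ℂ :=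
  PowerSeries.mk fun n => if n = 0 then 0 else coeff (n - 1) F / n

noncomputable def sdown (F : PowerSeries ℂ) : PowerSeries ℂ :=
  PowerSeries.mk fun n => coeff (n + 1) F

noncomputable def fe (γ : ℂ) : PowerSeries ℂ :=
  PowerSeries.mk fun n => -(γ⁻¹) ^ (n + 1)

noncomputable def hm (b e : ℂ) (F : PowerSeries ℂ) : PowerSeries ℂ :=
  if e = b then sdown F else fe (e - b) * F

lemma hm_def (b e : ℂ) (F : PowerSeries ℂ) :
    hm b e F = if e = b then sdown F else fe (e - b) * F := rfl

noncomputable def lp (b : ℂ) : List ℂ → PowerSeries ℂ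
  | [] => 1
  | e :: t => intg (hm b e (lp b t))

@[simp] lemma coeff_intg (F : PowerSeries ℂ) (n : ℕ) :
    coeff n (intg F) = if n = 0 then 0 else coeff (n - 1) F / n := by
  simp [intg]

@[simp] lemma constantCoeff_intg (F : PowerSeries ℂ) :
    constantCoeff (intg F) = 0 := by
  rw [← coeff_zero_eq_constantCoeff]; simp

@[simp] lemma coeff_sdown (F : PowerSeries ℂ) (n : ℕ) :
    coeff n (sdown F) = coeff (n + 1) F := by simp [sdown]

lemma deriv_intg (F : PowerSeries ℂ) : d⁄dX ℂ (intg F) = F := by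
  ext n
  rw [coeff_derivative, coeff_intg]
  have : ((n : ℂ) + 1) ≠ 0 := by exact_mod_cast Nat.succ_ne_zero n
  rw [if_neg (Nat.succ_ne_zero n), Nat.add_sub_cancel, Nat.cast_succ, div_mul_cancel₀ _ this]

lemma sdown_add (F G : PowerSeries ℂ) : sdown (F + G) = sdown F + sdown G := by
  ext n; simp

@[simp] lemma sdown_zero : sdown 0 = 0 := by ext n; simp

lemma hm_add (b e : ℂ) (F G : PowerSeries ℂ) :
    hm b e (F + G) = hm b e F + hm b e G := by
  unfold hm; split
  · exact sdown_add F G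
  · exact mul_add _ _ _

@[simp] lemma hm_zero (b e : ℂ) : hm b e 0 = 0 := by
  unfold hm; split <;> simp

lemma sdown_mul_left (F G : PowerSeries ℂ) (h : constantCoeff F = 0) :
    sdown (F * G) = sdown F * G := by
  ext n
  rw [coeff_sdown, coeff_mul, coeff_mul, Finset.Nat.antidiagonal_succ, Finset.sum_cons,
    Finset.sum_map]
  rw [coeff_zero_eq_constantCoeff, h]
  simp

lemma sdown_mul_right (F G : PowerSeries ℂ) (h : constantCoeff G = 0) :
    sdown (F * G) = F * sdown G := by
  rw [mul_comm, sdown_mul_left G F h, mul_comm]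

@[simp] lemma lp_nil (b : ℂ) : lp b [] = 1 := rfl

lemma lp_cons (b e : ℂ) (t : List ℂ) : lp b (e :: t) = intg (hm b e (lp b t)) := rfl

lemma constantCoeff_lp_cons (b e : ℂ) (t : List ℂ) :
    constantCoeff (lp b (e :: t)) = 0 := by
  rw [lp_cons]; simp

lemma deriv_lp_cons (b e : ℂ) (t : List ℂ) :
    d⁄dX ℂ (lp b (e :: t)) = hm b e (lp b t) := by
  rw [lp_cons, deriv_intg]

lemma ok_tail {b a : ℂ} {u : List ℂ} (h : (a :: u).getLast? ≠ some b) :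
    u.getLast? ≠ some b := by
  cases u with
  | nil => simp
  | cons x t => simpa using h

lemma ok_head {b a : ℂ} {u : List ℂ} (h : (a :: u).getLast? ≠ some b) (ha : a = b) :
    u ≠ [] := by
  rintro rfl
  simp [ha] at h

/-- Combined structural facts about shuffles. -/
theorem sh_facts {α : Type*} : ∀ (u v : List α), ∀ w ∈ sh u v,
    w.length = u.length + v.length ∧ (∀ x ∈ w, x ∈ u ∨ x ∈ v) ∧
      (w.getLast? = u.getLast? ∨ w.getLast? = v.getLast?)
  | [], v => by
    intro w hw
    simp only [sh] at hw
    simp [Multiset.mem_singleton.mp hw]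
  | a :: u, [] => by
    intro w hw
    simp only [sh] at hw
    simp [Multiset.mem_singleton.mp hw]
  | a :: u, c :: v => by
    intro w hw
    simp only [sh, Multiset.mem_add, Multiset.mem_map] at hw
    rcases hw with ⟨s, hs, rfl⟩ | ⟨s, hs, rfl⟩
    · obtain ⟨hlen, hmem, hlast⟩ := sh_facts u (c :: v) s hs
      have hsne : s ≠ [] := by
        intro h; rw [h] at hlen
        simp only [List.length_nil, List.length_cons] at hlen
        omega
      obtain ⟨x, t, rfl⟩ := List.exists_cons_of_ne_nil hsne
      refine ⟨by simp [List.length] at hlen ⊢; omega, ?_, ?_⟩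
      · intro y hy
        rcases List.mem_cons.mp hy with rfl | hy
        · left; exact List.mem_cons_self
        · rcases hmem y hy with h | h
          · left; exact List.mem_cons_of_mem _ h
          · right; exact h
      · rw [List.getLast?_cons_cons]
        rcases hlast with h | h
        · left
          cases u with
          | nil =>
            exfalso
            have hsome : (x :: t).getLast?.isSome := List.getLast?_isSome.mpr (by simp)
            rw [h] at hsome
            simp at hsome
          | cons y t' => rw [List.getLast?_cons_cons, h]
        · right; exact h
    · obtain ⟨hlen, hmem, hlast⟩ := sh_facts (a :: u) v s hs
      have hsne : s ≠ [] := by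
        intro h; rw [h] at hlen
        simp only [List.length_nil, List.length_cons] at hlen
        omega
      obtain ⟨x, t, rfl⟩ := List.exists_cons_of_ne_nil hsne
      refine ⟨by simp [List.length] at hlen ⊢; omega, ?_, ?_⟩
      · intro y hy
        rcases List.mem_cons.mp hy with rfl | hy
        · right; exact List.mem_cons_self
        · rcases hmem y hy with h | h
          · left; exact h
          · right; exact List.mem_cons_of_mem _ h
      · rw [List.getLast?_cons_cons]
        rcases hlast with h | h
        · left; exact h
        · right
          cases v with
          | nil =>
            exfalso
            have hsome : (x :: t).getLast?.isSome := List.getLast?_isSome.mpr (by simp)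
            rw [h] at hsome
            simp at hsome
          | cons y t' => rw [List.getLast?_cons_cons, h]
termination_by u v => u.length + v.length

lemma sum_map_deriv (b : ℂ) (M : Multiset (List ℂ)) :
    d⁄dX ℂ ((M.map (lp b)).sum) = ((M.map fun w => d⁄dX ℂ (lp b w))).sum := by
  induction M using Multiset.induction with
  | empty => simp
  | cons a s ih => simp [ih]

lemma hm_sum (b e : ℂ) (M : Multiset (List ℂ)) :
    ((M.map fun s => hm b e (lp b s))).sum = hm b e ((M.map (lp b)).sum) := by
  induction M using Multiset.induction with
  | empty => simp
  | cons a s ih => simp [hm_add, ih]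

lemma constantCoeff_sh_sum (b : ℂ) (u v : List ℂ) (hu : u ≠ [] ∨ v ≠ []) :
    constantCoeff (((sh u v).map (lp b)).sum) = 0 := by
  rw [map_multiset_sum, Multiset.map_map]
  apply Multiset.sum_eq_zero
  intro x hx
  simp only [Multiset.mem_map, Function.comp_apply] at hx
  obtain ⟨w, hw, rfl⟩ := hx
  obtain ⟨hlen, -, -⟩ := sh_facts u v w hw
  have hne : w ≠ [] := by
    intro h; rw [h] at hlen
    simp only [List.length_nil] at hlen
    have h1 : u.length ≠ 0 ∨ v.length ≠ 0 := by
      rcases hu with h' | h'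
      · exact Or.inl (by simpa using List.length_pos_iff.mpr h' |>.ne')
      · exact Or.inr (by simpa using List.length_pos_iff.mpr h' |>.ne')
    omega
  obtain ⟨x, t, rfl⟩ := List.exists_cons_of_ne_nil hne
  exact constantCoeff_lp_cons b x t

theorem shuf (b : ℂ) : ∀ u v : List ℂ, u.getLast? ≠ some b → v.getLast? ≠ some b →
    lp b u * lp b v = ((sh u v).map (lp b)).sum
  | [], v => by
    intro _ _
    simp [sh]
  | a :: u, [] => by
    intro _ _
    simp [sh]
  | a :: u, c :: v => by
    intro hu hv
    have ihl := shuf b u (c :: v) (ok_tail hu) hv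
    have ihr := shuf b (a :: u) v hu (ok_tail hv)
    apply PowerSeries.derivative.ext
    · -- derivatives agree
      have key : d⁄dX ℂ (lp b (a :: u) * lp b (c :: v)) =
          hm b a (lp b u) * lp b (c :: v) + lp b (a :: u) * hm b c (lp b v) := by
        rw [Derivation.leibniz, smul_eq_mul, smul_eq_mul, deriv_lp_cons, deriv_lp_cons]
        ring
      rw [key, sum_map_deriv]
      have expand : sh (a :: u) (c :: v) =
          (sh u (c :: v)).map (a :: ·) + (sh (a :: u) v).map (c :: ·) := by
        rw [sh]
      have e1 : (((sh u (c :: v)).map (a :: ·)).map fun w => d⁄dX ℂ (lp b w)) =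
          (sh u (c :: v)).map fun s => hm b a (lp b s) := by
        rw [Multiset.map_map]
        exact Multiset.map_congr rfl fun s _ => by
          simp only [Function.comp_apply, deriv_lp_cons]
      have e2 : (((sh (a :: u) v).map (c :: ·)).map fun w => d⁄dX ℂ (lp b w)) =
          (sh (a :: u) v).map fun s => hm b c (lp b s) := by
        rw [Multiset.map_map]
        exact Multiset.map_congr rfl fun s _ => by
          simp only [Function.comp_apply, deriv_lp_cons]
      rw [expand, Multiset.map_add, e1, e2, Multiset.sum_add, hm_sum, hm_sum, ← ihl, ← ihr]
      -- now push hm through products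
      have ha : hm b a (lp b u * lp b (c :: v)) = hm b a (lp b u) * lp b (c :: v) := by
        unfold hm; split
        · rename_i h
          exact sdown_mul_left _ _ (by
            obtain ⟨x, t, rfl⟩ := List.exists_cons_of_ne_nil (ok_head hu h)
            exact constantCoeff_lp_cons b x t)
        · rw [mul_assoc]
      have hc : hm b c (lp b (a :: u) * lp b v) = lp b (a :: u) * hm b c (lp b v) := by
        unfold hm; split
        · rename_i h
          exact sdown_mul_right _ _ (by
            obtain ⟨x, t, rfl⟩ := List.exists_cons_of_ne_nil (ok_head hv h)
            exact constantCoeff_lp_cons b x t)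
        · rw [mul_comm (fe (c - b)), mul_assoc, mul_comm (fe (c - b))]
      rw [ha, hc]
    · -- constant coefficients agree
      rw [map_mul, constantCoeff_lp_cons, zero_mul, constantCoeff_sh_sum]
      left; exact List.cons_ne_nil a u
termination_by u v => u.length + v.length

noncomputable def stepb (F : PowerSeries ℂ) : PowerSeries ℂ := intg (sdown F)

noncomputable def lpD (b : ℂ) : List (ℕ × ℂ) → PowerSeries ℂ
  | [] => 1
  | (k, c) :: L => stepb^[k - 1] (intg (fe (c - b) * lpD b L))

lemma parse_ne_nil : ∀ {w : List ℂ}, w ≠ [] → w.getLast? ≠ some b → parseWord b w ≠ []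
  | [], h, _ => absurd rfl h
  | a :: t, _, hok => by
    by_cases ha : a = b
    · have ht : t ≠ [] := ok_head hok ha
      have := parse_ne_nil (w := t) ht (ok_tail hok)
      simp only [parseWord, if_pos ha]
      rcases hp : parseWord b t with _ | ⟨⟨k, c⟩, rest⟩
      · exact absurd hp this
      · simp
    · simp [parseWord, ha]

lemma parse_k_pos : ∀ {w : List ℂ}, ∀ p ∈ parseWord b w, 1 ≤ p.1
  | [] => by simp [parseWord]
  | a :: t => by
    intro p hp
    by_cases ha : a = b
    · simp only [parseWord, if_pos ha] at hp
      rcases hq : parseWord b t with _ | ⟨⟨k, c⟩, rest⟩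
      · rw [hq] at hp; simp at hp
      · rw [hq] at hp
        simp only [List.mem_cons] at hp
        rcases hp with rfl | hp
        · simp
        · exact parse_k_pos (w := t) p (by rw [hq]; exact List.mem_cons_of_mem _ hp)
    · simp only [parseWord, if_neg ha, List.mem_cons] at hp
      rcases hp with rfl | hp
      · simp
      · exact parse_k_pos (w := t) p hp

lemma parse_mem : ∀ {w : List ℂ}, ∀ p ∈ parseWord b w, p.2 ∈ w ∧ p.2 ≠ b
  | [] => by simp [parseWord]
  | a :: t => by
    intro p hp
    by_cases ha : a = b
    · simp only [parseWord, if_pos ha] at hp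
      rcases hq : parseWord b t with _ | ⟨⟨k, c⟩, rest⟩
      · rw [hq] at hp; simp at hp
      · rw [hq] at hp
        simp only [List.mem_cons] at hp
        have key : ∀ q ∈ parseWord b t, q.2 ∈ t ∧ q.2 ≠ b := fun q hq' => parse_mem q hq'
        rcases hp with rfl | hp
        · have := key (k, c) (by rw [hq]; exact List.mem_cons_self)
          exact ⟨List.mem_cons_of_mem _ this.1, this.2⟩
        · have := key p (by rw [hq]; exact List.mem_cons_of_mem _ hp)
          exact ⟨List.mem_cons_of_mem _ this.1, this.2⟩
    · simp only [parseWord, if_neg ha, List.mem_cons] at hp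
      rcases hp with rfl | hp
      · exact ⟨List.mem_cons_self, ha⟩
      · have := parse_mem (w := t) p hp
        exact ⟨List.mem_cons_of_mem _ this.1, this.2⟩

lemma lp_eq_lpD : ∀ {w : List ℂ}, w.getLast? ≠ some b → lp b w = lpD b (parseWord b w)
  | [], _ => by simp [parseWord, lpD, lp_nil]
  | a :: t, hok => by
    have ih := lp_eq_lpD (ok_tail hok)
    by_cases ha : a = b
    · have ht : t ≠ [] := ok_head hok ha
      have hpn := parse_ne_nil (w := t) ht (ok_tail hok)
      rcases hq : parseWord b t with _ | ⟨⟨k, c⟩, rest⟩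
      · exact absurd hq hpn
      · have hk : 1 ≤ k := parse_k_pos (w := t) (k, c) (by rw [hq]; exact List.mem_cons_self)
        have hparse : parseWord b (a :: t) = (k + 1, c) :: rest := by
          simp only [parseWord, if_pos ha, hq]
        rw [hparse, lp_cons, hm_def, if_pos ha]
        show intg (sdown (lp b t)) = lpD b ((k + 1, c) :: rest)
        rw [ih, hq]
        show stepb (lpD b ((k, c) :: rest)) = _
        show _ = stepb^[k + 1 - 1] (intg (fe (c - b) * lpD b rest))
        obtain ⟨k', rfl⟩ : ∃ k', k = k' + 1 := ⟨k - 1, by omega⟩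
        show stepb (stepb^[k' + 1 - 1] _) = _
        rw [Nat.add_sub_cancel, Nat.add_sub_cancel, ← Function.iterate_succ_apply' stepb]
    · have hparse : parseWord b (a :: t) = (1, a) :: parseWord b t := by
        simp only [parseWord, if_neg ha]
      rw [hparse, lp_cons, hm_def, if_neg ha]
      show intg (fe (a - b) * lp b t) = lpD b ((1, a) :: parseWord b t)
      rw [ih]
      rfl



/-- Total weight of a gap vector. -/
def wt {r : ℕ} (d : Fin r → ℕ) : ℕ := ∑ j, (d j + 1)

/-- Partial (suffix) sums of a gap vector: the `mᵢ`. -/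
def gapM {r : ℕ} (d : Fin r → ℕ) (i : Fin r) : ℕ := ∑ j, if i ≤ j then d j + 1 else 0

lemma gapM_zero {r : ℕ} (d : Fin (r + 1) → ℕ) : gapM d 0 = wt d := by
  unfold gapM wt
  exact Finset.sum_congr rfl fun j _ => if_pos (Fin.zero_le j)

lemma gapM_succ_cons {r : ℕ} (x : ℕ) (d : Fin r → ℕ) (i : Fin r) :
    gapM (Fin.cons x d) i.succ = gapM d i := by
  unfold gapM
  rw [Fin.sum_univ_succ]
  have h0 : ¬ (i.succ ≤ (0 : Fin (r + 1))) := by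
    rw [Fin.le_def]
    simp
  rw [if_neg h0, zero_add]
  exact Finset.sum_congr rfl fun j _ => by
    simp only [Fin.succ_le_succ_iff, Fin.cons_succ]

lemma le_gapM {r : ℕ} (d : Fin r → ℕ) (i : Fin r) : d i + 1 ≤ gapM d i := by
  have : d i + 1 = if i ≤ i then d i + 1 else 0 := by rw [if_pos le_rfl]
  rw [this]
  exact Finset.single_le_sum (f := fun j => if i ≤ j then d j + 1 else 0)
    (fun j _ => by positivity) (Finset.mem_univ i)

lemma gapM_pos {r : ℕ} (d : Fin r → ℕ) (i : Fin r) : 0 < gapM d i :=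
  lt_of_lt_of_le (Nat.succ_pos _) (le_gapM d i)

lemma gapM_strictAnti {r : ℕ} (d : Fin r → ℕ) : StrictAnti (gapM d) := by
  intro i i' h
  have key : gapM d i' + (d i + 1) ≤ gapM d i := by
    unfold gapM
    have hdi : d i + 1 = ∑ j, if j = i then d j + 1 else 0 := by
      rw [Finset.sum_ite_eq' Finset.univ i (fun j => d j + 1), if_pos (Finset.mem_univ i)]
    rw [hdi, ← Finset.sum_add_distrib]
    apply Finset.sum_le_sum
    intro j _
    by_cases h1 : i' ≤ j
    · have hij : i ≤ j := le_of_lt (lt_of_lt_of_le h h1)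
      have h2 : ¬ (j = i) := by
        rintro rfl
        exact absurd (lt_of_lt_of_le h h1) (lt_irrefl j)
      rw [if_pos h1, if_neg h2, if_pos hij, add_zero]
    · rw [if_neg h1, zero_add]
      by_cases h2 : j = i
      · subst h2
        rw [if_pos rfl, if_pos le_rfl]
      · rw [if_neg h2]
        exact Nat.zero_le _
  omega

lemma gapM_succ_eq {r : ℕ} (d : Fin r → ℕ) (i : Fin r) (h : (i : ℕ) + 1 < r) :
    gapM d i = d i + 1 + gapM d ⟨(i : ℕ) + 1, h⟩ := by
  unfold gapM
  have key : ∀ j : Fin r, (if i ≤ j then d j + 1 else 0) =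
      (if j = i then d j + 1 else 0) + (if (⟨(i : ℕ) + 1, h⟩ : Fin r) ≤ j then d j + 1 else 0) := by
    intro j
    by_cases h2 : j = i
    · subst h2
      rw [if_pos le_rfl, if_pos rfl, if_neg, add_zero]
      intro hle
      rw [Fin.le_def] at hle
      simp at hle
    · by_cases h1 : i ≤ j
      · have hlt : (i : ℕ) < (j : ℕ) := lt_of_le_of_ne (Fin.le_def.mp h1)
          (fun hc => h2 (Fin.ext hc.symm))
        have h3 : (⟨(i : ℕ) + 1, h⟩ : Fin r) ≤ j := by
          rw [Fin.le_def]
          simpa using hlt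
        rw [if_pos h1, if_neg h2, if_pos h3, zero_add]
      · have h3 : ¬ ((⟨(i : ℕ) + 1, h⟩ : Fin r) ≤ j) := by
          rw [Fin.le_def]
          simp only [not_le]
          have := Fin.le_def.not.mp h1
          omega
        rw [if_neg h1, if_neg h2, if_neg h3, add_zero]
  rw [Finset.sum_congr rfl fun j _ => key j, Finset.sum_add_distrib,
    Finset.sum_ite_eq' Finset.univ i (fun j => d j + 1), if_pos (Finset.mem_univ i)]

lemma gapM_last {r : ℕ} (d : Fin r → ℕ) (i : Fin r) (h : (i : ℕ) + 1 = r) :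
    gapM d i = d i + 1 := by
  unfold gapM
  have key : ∀ j : Fin r, (if i ≤ j then d j + 1 else 0) = (if j = i then d j + 1 else 0) := by
    intro j
    have hj := j.isLt
    by_cases h2 : j = i
    · subst h2; rw [if_pos le_rfl, if_pos rfl]
    · rw [if_neg h2, if_neg]
      intro hle
      rw [Fin.le_def] at hle
      have : (j : ℕ) = (i : ℕ) := by omega
      exact h2 (Fin.ext this)
  rw [Finset.sum_congr rfl fun j _ => key j,
    Finset.sum_ite_eq' Finset.univ i (fun j => d j + 1), if_pos (Finset.mem_univ i)]

noncomputable def toGaps {r : ℕ} (f : Fin r → ℕ) : Fin r → ℕ :=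
  fun i => f i - (if h : (i : ℕ) + 1 < r then f ⟨(i : ℕ) + 1, h⟩ else 0) - 1

noncomputable def gapEquiv (r : ℕ) :
    (Fin r → ℕ) ≃ {f : Fin r → ℕ // StrictAnti f ∧ ∀ i, 0 < f i} where
  toFun d := ⟨gapM d, gapM_strictAnti d, gapM_pos d⟩
  invFun f := toGaps f.1
  left_inv d := by
    funext i
    by_cases h : (i : ℕ) + 1 < r
    · simp only [toGaps, dif_pos h]
      rw [gapM_succ_eq d i h]
      omega
    · have hl : (i : ℕ) + 1 = r := by have := i.isLt; omega
      simp only [toGaps, dif_neg h]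
      rw [gapM_last d i hl]
      omega
  right_inv f := by
    apply Subtype.ext
    funext i
    show gapM (toGaps f.1) i = f.1 i
    have key : ∀ m (i : Fin r), r - (i : ℕ) ≤ m → gapM (toGaps f.1) i = f.1 i := by
      intro m
      induction m with
      | zero => intro i h; have := i.isLt; omega
      | succ m ih =>
        intro i h
        by_cases hi : (i : ℕ) + 1 < r
        · rw [gapM_succ_eq _ i hi, ih ⟨(i : ℕ) + 1, hi⟩ (by simp; omega)]
          have hlt : f.1 ⟨(i : ℕ) + 1, hi⟩ < f.1 i :=
            f.2.1 (show i < ⟨(i : ℕ) + 1, hi⟩ by rw [Fin.lt_def]; simp)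
          simp only [toGaps, dif_pos hi]
          omega
        · have hieq : (i : ℕ) + 1 = r := by have := i.isLt; omega
          rw [gapM_last _ i hieq]
          have hpos := f.2.2 i
          simp only [toGaps, dif_neg hi]
          omega
    exact key (r - i) i le_rfl

/-- The summand of the polylog series in gap coordinates. -/
noncomputable def term (b z : ℂ) (L : List (ℕ × ℂ)) (d : Fin L.length → ℕ) : ℂ :=
  ∏ i, ((z - b) / ((L.get i).2 - b)) ^ (d i + 1) / (gapM d i : ℂ) ^ ((L.get i).1)

lemma tsum_subtype_eq_gap (b z : ℂ) (L : List (ℕ × ℂ)) :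
    (∑' m : {f : Fin L.length → ℕ // StrictAnti f ∧ ∀ i, 0 < f i},
      ∏ i : Fin L.length,
        ((z - b) / ((L.get i).2 - b)) ^
            (m.1 i - (if h : (i : ℕ) + 1 < L.length then m.1 ⟨(i : ℕ) + 1, h⟩ else 0)) /
          ((m.1 i : ℂ)) ^ ((L.get i).1))
      = ∑' d : Fin L.length → ℕ, term b z L d := by
  rw [← Equiv.tsum_eq (gapEquiv L.length)]
  apply tsum_congr; intro d
  unfold term
  apply Finset.prod_congr rfl; intro i _
  have hm : ((gapEquiv L.length) d).1 i = gapM d i := rfl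
  have hexp : ((gapEquiv L.length) d).1 i -
      (if h : (i : ℕ) + 1 < L.length then ((gapEquiv L.length) d).1 ⟨(i : ℕ) + 1, h⟩ else 0)
      = d i + 1 := by
    rw [hm]
    by_cases h : (i : ℕ) + 1 < L.length
    · rw [dif_pos h]
      have : ((gapEquiv L.length) d).1 ⟨(i : ℕ) + 1, h⟩ = gapM d ⟨(i : ℕ) + 1, h⟩ := rfl
      rw [this, gapM_succ_eq d i h]
      omega
    · rw [dif_neg h]
      have hl : (i : ℕ) + 1 = L.length := by have := i.isLt; omega
      rw [gapM_last d i hl]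
      omega
  rw [hexp, hm]

lemma listLi_eq_gap (b z : ℂ) (w : List ℂ) :
    listLi b w z = (-1 : ℂ) ^ (parseWord b w).length *
      ∑' d : Fin (parseWord b w).length → ℕ, term b z (parseWord b w) d := by
  rw [listLi, tsum_subtype_eq_gap]


lemma le_wt {r : ℕ} (d : Fin r → ℕ) (i : Fin r) : d i + 1 ≤ wt d :=
  Finset.single_le_sum (f := fun j => d j + 1) (fun j _ => Nat.zero_le _) (Finset.mem_univ i)

lemma wt_cons {r : ℕ} (x : ℕ) (d : Fin r → ℕ) : wt (Fin.cons x d) = x + 1 + wt d := by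
  unfold wt
  rw [Fin.sum_univ_succ, Fin.cons_zero]
  congr 1

lemma summable_geom_pi : ∀ (r : ℕ) (ρ : Fin r → ℝ), (∀ i, 0 ≤ ρ i) → (∀ i, ρ i < 1) →
    Summable (fun d : Fin r → ℕ => ∏ i, ρ i ^ (d i + 1))
  | 0, ρ, _, _ => by
    have h : (fun d : Fin 0 → ℕ => ∏ i, ρ i ^ (d i + 1)) = fun _ => 1 := by
      funext d; simp
    rw [h]
    exact (hasSum_single (f := fun _ : Fin 0 → ℕ => (1 : ℝ)) default
      (fun b hb => absurd (Subsingleton.elim b default) hb)).summable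
  | r + 1, ρ, h0, h1 => by
    have ih := summable_geom_pi r (fun i => ρ i.succ) (fun i => h0 i.succ) (fun i => h1 i.succ)
    have hgeom : Summable (fun x : ℕ => ρ 0 ^ (x + 1)) := by
      have := (summable_geometric_of_lt_one (h0 0) (h1 0)).mul_right (ρ 0)
      apply this.congr
      intro x
      rw [pow_succ]
    have hprod := hgeom.mul_of_nonneg ih (fun x => pow_nonneg (h0 0) _)
      (fun d => Finset.prod_nonneg fun i _ => pow_nonneg (h0 i.succ) _)
    apply (Equiv.summable_iff (Fin.consEquiv (fun _ : Fin (r + 1) => ℕ))).mp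
    apply hprod.congr
    intro p
    show ρ 0 ^ (p.1 + 1) * (∏ i, ρ i.succ ^ (p.2 i + 1)) = ∏ i, ρ i ^ (Fin.cons p.1 p.2 i + 1)
    rw [Fin.prod_univ_succ, Fin.cons_zero]
    congr 1

lemma term_norm_le (b z : ℂ) (L : List (ℕ × ℂ)) (d : Fin L.length → ℕ) :
    ‖term b z L d‖ ≤ ∏ i, ‖(z - b) / ((L.get i).2 - b)‖ ^ (d i + 1) := by
  unfold term
  rw [norm_prod]
  apply Finset.prod_le_prod (fun i _ => norm_nonneg _)
  intro i _
  rw [norm_div, norm_pow, norm_pow]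
  have h1 : (1 : ℝ) ≤ ‖((gapM d i : ℕ) : ℂ)‖ ^ ((L.get i).1) := by
    apply one_le_pow₀
    rw [Complex.norm_natCast]
    exact_mod_cast gapM_pos d i
  exact div_le_self (pow_nonneg (norm_nonneg _) _) h1

lemma summable_term_norm (b z : ℂ) (L : List (ℕ × ℂ))
    (hq : ∀ p ∈ L, ‖z - b‖ < ‖p.2 - b‖) :
    Summable (fun d => ‖term b z L d‖) := by
  have hρ0 : ∀ i : Fin L.length, 0 ≤ ‖(z - b) / ((L.get i).2 - b)‖ :=
    fun i => norm_nonneg _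
  have hρ1 : ∀ i : Fin L.length, ‖(z - b) / ((L.get i).2 - b)‖ < 1 := by
    intro i
    have h := hq (L.get i) (List.get_mem L i)
    rw [norm_div]
    rw [div_lt_one (lt_of_le_of_lt (norm_nonneg _) h)]
    exact h
  exact Summable.of_nonneg_of_le (fun d => norm_nonneg _) (term_norm_le b z L)
    (summable_geom_pi L.length _ hρ0 hρ1)

lemma summable_term (b z : ℂ) (L : List (ℕ × ℂ))
    (hq : ∀ p ∈ L, ‖z - b‖ < ‖p.2 - b‖) :
    Summable (term b z L) :=
  (summable_term_norm b z L hq).of_norm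

/-- The coefficient factor: `term` with the powers of `z - b` removed. -/
noncomputable def inn (b : ℂ) (L : List (ℕ × ℂ)) (d : Fin L.length → ℕ) : ℂ :=
  ∏ i, (((L.get i).2 - b)⁻¹) ^ (d i + 1) / (gapM d i : ℂ) ^ ((L.get i).1)

/-- Power series coefficients of the polylog, defined by grouping gap vectors by weight. -/
noncomputable def cL (b : ℂ) (L : List (ℕ × ℂ)) (n : ℕ) : ℂ :=
  ∑' d : Fin L.length → ℕ, if wt d = n then inn b L d else 0

lemma term_eq_inn (b z : ℂ) (L : List (ℕ × ℂ)) (d : Fin L.length → ℕ) :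
    term b z L d = (z - b) ^ (wt d) * inn b L d := by
  unfold term inn wt
  rw [← Finset.prod_pow_eq_pow_sum, ← Finset.prod_mul_distrib]
  apply Finset.prod_congr rfl
  intro i _
  rw [div_eq_mul_inv (z - b), mul_pow, mul_div_assoc]

lemma summable_ite_wt {α : Type*} [AddCommMonoid α] [TopologicalSpace α] (r n : ℕ)
    (g : (Fin r → ℕ) → α) : Summable (fun d => if wt d = n then g d else 0) := by
  apply summable_of_ne_finset_zero (s := Fintype.piFinset fun _ : Fin r => Finset.range n)
  intro d hd
  rw [if_neg]
  intro hwt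
  apply hd
  rw [Fintype.mem_piFinset]
  intro i
  rw [Finset.mem_range]
  have := le_wt d i
  omega

lemma fiber_eval (b z : ℂ) (L : List (ℕ × ℂ))
    (hq : ∀ p ∈ L, ‖z - b‖ < ‖p.2 - b‖) (n : ℕ) :
    (∑' d : ↥(wt ⁻¹' {n} : Set (Fin L.length → ℕ)), term b z L d.1)
      = (z - b) ^ n * cL b L n := by
  rw [tsum_subtype]
  unfold cL
  rw [← tsum_mul_left]
  apply tsum_congr
  intro d
  rw [Set.indicator_apply]
  by_cases h : wt d = n
  · rw [if_pos (by simpa using h), if_pos h, term_eq_inn, h]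
  · rw [if_neg (by simpa using h), if_neg h, mul_zero]

lemma hasSum_fiber (b z : ℂ) (L : List (ℕ × ℂ))
    (hq : ∀ p ∈ L, ‖z - b‖ < ‖p.2 - b‖) :
    HasSum (fun n => (z - b) ^ n * cL b L n) (∑' d, term b z L d) := by
  have h := ((summable_term b z L hq).hasSum).tsum_fiberwise wt
  have he : (fun n => ∑' d : ↥(wt ⁻¹' {n} : Set (Fin L.length → ℕ)), term b z L d.1)
      = fun n => (z - b) ^ n * cL b L n := funext (fiber_eval b z L hq)
  rwa [he] at h

lemma cL_nil (b : ℂ) (n : ℕ) : cL b [] n = if n = 0 then 1 else 0 := by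
  have h0 : cL b [] n
      = ∑' d : Fin 0 → ℕ, if wt d = n then inn b ([] : List (ℕ × ℂ)) d else 0 := rfl
  rw [h0, tsum_eq_single (default : Fin 0 → ℕ)
    (fun d hd => absurd (Subsingleton.elim d default) hd)]
  have hwt : wt (default : Fin 0 → ℕ) = 0 := rfl
  rw [hwt]
  by_cases h : n = 0
  · rw [if_pos (h ▸ rfl), if_pos h]
    unfold inn
    simp
  · rw [if_neg (fun hh => h hh.symm), if_neg h]

lemma cL_cons_zero (b : ℂ) (p : ℕ × ℂ) (L' : List (ℕ × ℂ)) : cL b (p :: L') 0 = 0 := by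
  unfold cL
  have h : ∀ d : Fin (p :: L').length → ℕ, (if wt d = 0 then inn b (p :: L') d else 0) = 0 := by
    intro d
    rw [if_neg]
    have := le_wt d ⟨0, Nat.succ_pos _⟩
    omega
  rw [tsum_congr h, tsum_zero]

lemma inn_cons (b : ℂ) (p : ℕ × ℂ) (L' : List (ℕ × ℂ)) (x : ℕ) (d' : Fin L'.length → ℕ) :
    inn b (p :: L') (Fin.cons x d') =
      ((p.2 - b)⁻¹) ^ (x + 1) / (((x + 1 + wt d' : ℕ) : ℂ)) ^ p.1 * inn b L' d' := by
  unfold inn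
  simp only [List.length_cons]
  rw [Fin.prod_univ_succ]
  congr 1
  · rw [Fin.cons_zero, gapM_zero, wt_cons]
    rfl
  · apply Finset.prod_congr rfl
    intro i _
    rw [Fin.cons_succ, gapM_succ_cons]
    rfl

lemma inn_bump (b : ℂ) (k : ℕ) (c : ℂ) (L' : List (ℕ × ℂ)) (d : Fin (L'.length + 1) → ℕ) :
    inn b ((k + 1, c) :: L') d = inn b ((k, c) :: L') d / ((wt d : ℕ) : ℂ) := by
  have hd : d = Fin.cons (d 0) (Fin.tail d) := (Fin.cons_self_tail d).symm
  conv_lhs => rw [hd]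
  conv_rhs => rw [hd]
  rw [inn_cons, inn_cons, wt_cons]
  rw [pow_succ ((((d 0 + 1 + wt (Fin.tail d) : ℕ)) : ℂ)) k]
  ring

lemma cL_bump (b : ℂ) (k : ℕ) (c : ℂ) (L' : List (ℕ × ℂ)) (n : ℕ) :
    cL b ((k + 1, c) :: L') n = (if n = 0 then 0 else cL b ((k, c) :: L') n / n) := by
  by_cases hn : n = 0
  · rw [if_pos hn, hn, cL_cons_zero]
  · rw [if_neg hn]
    unfold cL
    rw [← tsum_div_const]
    apply tsum_congr
    intro d
    by_cases h : wt d = n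
    · rw [if_pos h, if_pos h, inn_bump, h]
    · rw [if_neg h, if_neg h, zero_div]

lemma cL_cons (b c : ℂ) (L' : List (ℕ × ℂ)) (n : ℕ) (hn : n ≠ 0) :
    cL b ((1, c) :: L') n
      = (∑ p ∈ Finset.HasAntidiagonal.antidiagonal (n - 1), ((c - b)⁻¹) ^ (p.1 + 1) * cL b L' p.2) / n := by
  have hL : cL b ((1, c) :: L') n
      = ∑' d : Fin (L'.length + 1) → ℕ, if wt d = n then inn b ((1, c) :: L') d else 0 := rfl
  rw [hL]
  rw [← Equiv.tsum_eq (Fin.consEquiv (fun _ : Fin (L'.length + 1) => ℕ))]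
  have hsummand : ∀ q : ℕ × (Fin L'.length → ℕ),
      (if wt ((Fin.consEquiv (fun _ : Fin (L'.length + 1) => ℕ)) q) = n
        then inn b ((1, c) :: L') ((Fin.consEquiv (fun _ : Fin (L'.length + 1) => ℕ)) q) else 0)
      = if q.1 + 1 + wt q.2 = n
          then ((c - b)⁻¹) ^ (q.1 + 1) / (n : ℂ) * inn b L' q.2 else 0 := by
    intro q
    have he : (Fin.consEquiv (fun _ : Fin (L'.length + 1) => ℕ)) q = Fin.cons q.1 q.2 := rfl
    rw [he, wt_cons, inn_cons]
    by_cases h : q.1 + 1 + wt q.2 = n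
    · rw [if_pos h, if_pos h, pow_one, h]
    · rw [if_neg h, if_neg h]
  have hsum0 : Summable (fun d : Fin (L'.length + 1) → ℕ =>
      if wt d = n then inn b ((1, c) :: L') d else 0) := summable_ite_wt _ n _
  have hsum2 := (Equiv.summable_iff (Fin.consEquiv (fun _ : Fin (L'.length + 1) => ℕ))).mpr hsum0
  have hsum3 : Summable (fun q : ℕ × (Fin L'.length → ℕ) =>
      if q.1 + 1 + wt q.2 = n then ((c - b)⁻¹) ^ (q.1 + 1) / (n : ℂ) * inn b L' q.2 else 0) :=
    hsum2.congr hsummand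
  have hfib : ∀ x : ℕ, Summable fun d' : Fin L'.length → ℕ =>
      if x + 1 + wt d' = n then ((c - b)⁻¹) ^ (x + 1) / (n : ℂ) * inn b L' d' else 0 := by
    intro x
    apply summable_of_ne_finset_zero
      (s := Fintype.piFinset fun _ : Fin L'.length => Finset.range n)
    intro d hd
    rw [if_neg]
    intro hwt
    apply hd
    rw [Fintype.mem_piFinset]
    intro i
    rw [Finset.mem_range]
    have := le_wt d i
    omega
  rw [tsum_congr hsummand, Summable.tsum_prod' hsum3 hfib]
  have hinner : ∀ x : ℕ, (∑' d' : Fin L'.length → ℕ,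
      if x + 1 + wt d' = n then ((c - b)⁻¹) ^ (x + 1) / (n : ℂ) * inn b L' d' else 0)
      = if x < n then ((c - b)⁻¹) ^ (x + 1) / (n : ℂ) * cL b L' (n - 1 - x) else 0 := by
    intro x
    by_cases hx : x < n
    · rw [if_pos hx]
      unfold cL
      rw [← tsum_mul_left]
      apply tsum_congr
      intro d'
      by_cases h : wt d' = n - 1 - x
      · rw [if_pos (by omega), if_pos h]
      · rw [if_neg (by omega), if_neg h, mul_zero]
    · rw [if_neg hx]
      have h0 : ∀ d' : Fin L'.length → ℕ, (if x + 1 + wt d' = n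
          then ((c - b)⁻¹) ^ (x + 1) / (n : ℂ) * inn b L' d' else 0) = 0 :=
        fun d' => if_neg (by omega)
      rw [tsum_congr h0, tsum_zero]
  rw [tsum_congr hinner, tsum_eq_sum (s := Finset.range n)
    (by intro x hx; rw [if_neg]; simpa using hx)]
  rw [Finset.Nat.sum_antidiagonal_eq_sum_range_succ_mk, Finset.sum_div,
    show (n - 1).succ = n by omega]
  apply Finset.sum_congr rfl
  intro x hx
  rw [if_pos (Finset.mem_range.mp hx)]
  ring

lemma coeff_stepb (F : PowerSeries ℂ) (n : ℕ) :
    coeff n (stepb F) = if n = 0 then 0 else coeff n F / n := by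
  unfold stepb
  rw [coeff_intg]
  by_cases h : n = 0
  · rw [if_pos h, if_pos h]
  · rw [if_neg h, if_neg h, coeff_sdown]
    have h1 : n - 1 + 1 = n := by omega
    rw [h1]

lemma coeff_fe_mul (γ : ℂ) (F : PowerSeries ℂ) (m : ℕ) :
    coeff m (fe γ * F)
      = ∑ p ∈ Finset.HasAntidiagonal.antidiagonal m, (-(γ⁻¹) ^ (p.1 + 1)) * coeff p.2 F := by
  rw [coeff_mul]
  apply Finset.sum_congr rfl
  intro p _
  congr 1
  unfold fe
  rw [coeff_mk]

theorem coeff_lpD (b : ℂ) : ∀ (L : List (ℕ × ℂ)), (∀ p ∈ L, 1 ≤ p.1) → ∀ n,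
    coeff n (lpD b L) = (-1 : ℂ) ^ L.length * cL b L n := by
  intro L
  induction L with
  | nil =>
    intro _ n
    rw [cL_nil]
    show coeff n 1 = _
    rw [coeff_one]
    simp
  | cons p L' ih =>
    intro hk n
    obtain ⟨k0, c⟩ := p
    have hL' : ∀ p ∈ L', 1 ≤ p.1 := fun p hp => hk p (List.mem_cons_of_mem _ hp)
    obtain ⟨k, rfl⟩ : ∃ k, k0 = k + 1 :=
      ⟨k0 - 1, by have := hk (k0, c) (List.mem_cons_self); omega⟩
    clear hk
    induction k with
    | zero =>
      have hlpd : lpD b ((1, c) :: L') = intg (fe (c - b) * lpD b L') := rfl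
      rw [hlpd, coeff_intg]
      by_cases hn : n = 0
      · rw [if_pos hn, hn, cL_cons_zero, mul_zero]
      · rw [if_neg hn, coeff_fe_mul, cL_cons b c L' n hn, List.length_cons]
        have hterm : ∀ p ∈ Finset.HasAntidiagonal.antidiagonal (n - 1),
            (-((c - b)⁻¹) ^ (p.1 + 1)) * coeff p.2 (lpD b L')
            = (-1 : ℂ) ^ (L'.length + 1) * (((c - b)⁻¹) ^ (p.1 + 1) * cL b L' p.2) := by
          intro p _
          rw [ih hL' p.2]
          ring
        rw [Finset.sum_congr rfl hterm, ← Finset.mul_sum, mul_div_assoc]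
    | succ k ihk =>
      have hstep : lpD b ((k + 1 + 1, c) :: L') = stepb (lpD b ((k + 1, c) :: L')) := by
        show stepb^[k + 1] (intg (fe (c - b) * lpD b L'))
            = stepb (stepb^[k] (intg (fe (c - b) * lpD b L')))
        exact Function.iterate_succ_apply' stepb k _
      rw [hstep, coeff_stepb, cL_bump]
      by_cases hn : n = 0
      · rw [if_pos hn, if_pos hn, mul_zero]
      · rw [if_neg hn, if_neg hn, ihk, mul_div_assoc]
        simp only [List.length_cons]

theorem LI (b z : ℂ) (w : List ℂ) (hok : w.getLast? ≠ some b)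
    (hq : ∀ p ∈ parseWord b w, ‖z - b‖ < ‖p.2 - b‖) :
    Summable (fun n => ‖coeff n (lp b w) * (z - b) ^ n‖) ∧
      listLi b w z = ∑' n, coeff n (lp b w) * (z - b) ^ n := by
  have hk : ∀ p ∈ parseWord b w, 1 ≤ p.1 := fun p hp => parse_k_pos p hp
  have hcoeff : ∀ n, coeff n (lp b w)
      = (-1 : ℂ) ^ (parseWord b w).length * cL b (parseWord b w) n := by
    intro n
    rw [lp_eq_lpD hok]
    exact coeff_lpD b (parseWord b w) hk n
  set L := parseWord b w with hLdef
  have hterm : ∀ n, coeff n (lp b w) * (z - b) ^ n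
      = (-1 : ℂ) ^ L.length * ((z - b) ^ n * cL b L n) := by
    intro n; rw [hcoeff n]; ring
  constructor
  · have hbound : ∀ n : ℕ, ‖coeff n (lp b w) * (z - b) ^ n‖
        ≤ ∑' d : Fin L.length → ℕ, if wt d = n then ‖term b z L d‖ else 0 := by
      intro n
      rw [hterm n, norm_mul]
      have h1 : ‖(-1 : ℂ) ^ L.length‖ = 1 := by
        rw [norm_pow, norm_neg, norm_one, one_pow]
      rw [h1, one_mul]
      have h2 : (z - b) ^ n * cL b L n
          = ∑' d : Fin L.length → ℕ, if wt d = n then term b z L d else 0 := by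
        rw [← fiber_eval b z L hq n, tsum_subtype]
        apply tsum_congr
        intro d
        rw [Set.indicator_apply]
        by_cases h : wt d = n
        · rw [if_pos (by simpa using h), if_pos h]
        · rw [if_neg (by simpa using h), if_neg h]
      rw [h2]
      have hsn : Summable (fun d : Fin L.length → ℕ =>
          ‖if wt d = n then term b z L d else 0‖) := by
        apply Summable.of_nonneg_of_le (fun d => norm_nonneg _) _
          (summable_term_norm b z L hq)
        intro d
        by_cases h : wt d = n
        · rw [if_pos h]
        · rw [if_neg h, norm_zero]
          exact norm_nonneg _
      refine le_trans (norm_tsum_le_tsum_norm hsn) (le_of_eq (tsum_congr fun d => ?_))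
      by_cases h : wt d = n
      · rw [if_pos h, if_pos h]
      · rw [if_neg h, if_neg h, norm_zero]
    have hN : Summable (fun n : ℕ =>
        ∑' d : Fin L.length → ℕ, if wt d = n then ‖term b z L d‖ else 0) := by
      have h := ((summable_term_norm b z L hq).hasSum).tsum_fiberwise wt
      apply h.summable.congr
      intro n
      rw [tsum_subtype (wt ⁻¹' {n} : Set (Fin L.length → ℕ)) (fun d => ‖term b z L d‖)]
      apply tsum_congr
      intro d
      rw [Set.indicator_apply]
      by_cases hh : wt d = n
      · rw [if_pos (by simpa using hh), if_pos hh]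
      · rw [if_neg (by simpa using hh), if_neg hh]
    exact Summable.of_nonneg_of_le (fun n => norm_nonneg _) hbound hN
  · rw [listLi_eq_gap b z w, ← hLdef, ← (hasSum_fiber b z L hq).tsum_eq, ← tsum_mul_left]
    exact tsum_congr fun n => (hterm n).symm

end MPLAux

open MPLAux PowerSeries in
/-- The shuffle relation for multiple polylogarithms: for words `w₁, w₂` over the
alphabet `Σ` not ending in `x_b`, and `z` in the disc `|z−b| < min_{c≠b}|c−b|`,
`Li_b(w₁; z) · Li_b(w₂; z) = Li_b(w₁ ⧢ w₂; z)`, where `Li_b` is extended linearly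
(here: summed over the multiset of shuffles). -/
theorem listLi_shuffle (S : Finset ℂ) (b : ℂ) (hb : b ∈ S)
    (w₁ w₂ : List ℂ) (hw₁S : ∀ x ∈ w₁, x ∈ S) (hw₂S : ∀ x ∈ w₂, x ∈ S)
    (hw₁ : w₁.getLast? ≠ some b) (hw₂ : w₂.getLast? ≠ some b) (z : ℂ)
    (hz : ∀ c ∈ S, c ≠ b → ‖z - b‖ < ‖c - b‖) :
    listLi b w₁ z * listLi b w₂ z = ((sh w₁ w₂).map fun w => listLi b w z).sum := by

  have cond : ∀ w : List ℂ, (∀ x ∈ w, x ∈ S) →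
      (∀ p ∈ parseWord b w, ‖z - b‖ < ‖p.2 - b‖) := by
    intro w hwS p hp
    obtain ⟨hmem, hne⟩ := parse_mem p hp
    exact hz p.2 (hwS _ hmem) hne
  obtain ⟨hs1, he1⟩ := LI b z w₁ hw₁ (cond w₁ hw₁S)
  obtain ⟨hs2, he2⟩ := LI b z w₂ hw₂ (cond w₂ hw₂S)
  rw [he1, he2, tsum_mul_tsum_eq_tsum_sum_antidiagonal_of_summable_norm hs1 hs2]
  have step : ∀ n : ℕ, (∑ p ∈ Finset.HasAntidiagonal.antidiagonal n,
        (coeff p.1 (lp b w₁) * (z - b) ^ p.1) * (coeff p.2 (lp b w₂) * (z - b) ^ p.2))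
      = coeff n (lp b w₁ * lp b w₂) * (z - b) ^ n := by
    intro n
    rw [coeff_mul, Finset.sum_mul]
    apply Finset.sum_congr rfl
    intro p hp
    have : p.1 + p.2 = n := Finset.HasAntidiagonal.mem_antidiagonal.mp hp
    rw [← this, pow_add]
    ring
  rw [tsum_congr step]
  have hshuf := shuf b w₁ w₂ hw₁ hw₂
  rw [hshuf]
  -- now sum over the multiset
  have main : ∀ (M : Multiset (List ℂ)),
      (∀ v ∈ M, (∀ x ∈ v, x ∈ S) ∧ v.getLast? ≠ some b) →
      Summable (fun n => ‖coeff n ((M.map (lp b)).sum) * (z - b) ^ n‖) ∧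
      ∑' n, coeff n ((M.map (lp b)).sum) * (z - b) ^ n
        = (M.map fun w => listLi b w z).sum := by
    intro M
    induction M using Multiset.induction with
    | empty =>
      intro _
      constructor
      · simp only [Multiset.map_zero, Multiset.sum_zero, map_zero, zero_mul, norm_zero]
        exact summable_zero
      · simp only [Multiset.map_zero, Multiset.sum_zero, map_zero, zero_mul, tsum_zero]
    | cons v M ih =>
      intro h
      have hv := h v (Multiset.mem_cons_self _ _)
      obtain ⟨ihs, ihe⟩ := ih (fun w hw => h w (Multiset.mem_cons_of_mem hw))
      obtain ⟨hsv, hev⟩ := LI b z v hv.2 (cond v hv.1)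
      have hexp : ∀ n, coeff n (((v ::ₘ M).map (lp b)).sum) * (z - b) ^ n
          = coeff n (lp b v) * (z - b) ^ n
            + coeff n ((M.map (lp b)).sum) * (z - b) ^ n := by
        intro n
        rw [Multiset.map_cons, Multiset.sum_cons, map_add, add_mul]
      constructor
      · apply Summable.of_nonneg_of_le (fun n => norm_nonneg _) _ (hsv.add ihs)
        intro n
        rw [hexp n]
        exact norm_add_le _ _
      · rw [tsum_congr hexp, Summable.tsum_add hsv.of_norm ihs.of_norm, ihe, ← hev,
          Multiset.map_cons, Multiset.sum_cons]
  obtain ⟨-, he⟩ := main (sh w₁ w₂) (fun v hv => by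
    obtain ⟨-, hmem, hlast⟩ := sh_facts w₁ w₂ v hv
    refine ⟨fun x hx => (hmem x hx).elim (hw₁S x) (hw₂S x), ?_⟩
    rcases hlast with h | h <;> rw [h] <;> assumption)
  exact he
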